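/- arXiv:math-ph/0609017 — 3 statements merged into one kernel-verified Lean document; each statement's English description precedes it below -/
import Mathlib

section
/- Let L, w, Γ be as above and define G_z := (√z⁻¹ e^{-√z x}, -(-L+z)⁻¹ w) ∈ L²(0,∞) ⊕ 𝔥 for Re√z > 0. Then for all admissible z, w in the resolvent set, Γ(z) - Γ(ζ) = (z - ζ)·⟨G_{ζ*}, G_z⟩, where the inner product is taken in L²(0,∞) ⊕ 𝔥. -/
open Complex MeasureTheory Set

/-- `Γ(z) = -(1/√z + ⟨w, (-L+z)⁻¹ w⟩)` with `√z = z^{1/2}` the branch of positive real part. -/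
noncomputable def Gam (𝔥 : Type*) [NormedAddCommGroup 𝔥] [InnerProductSpace ℂ 𝔥]
    (L : Module.End ℂ 𝔥) (w : 𝔥) (z : ℂ) : ℂ :=
  -((z ^ (1/2 : ℂ))⁻¹ + (inner ℂ w ((Ring.inverse (z • (1 : Module.End ℂ 𝔥) - L)) w) : ℂ))

open Filter Topology in
/-- `∫_0^∞ e^{-cx} dx = 1/c` for `Re c > 0`. -/
lemma aux_integral_cexp {c : ℂ} (hc : 0 < c.re) :
    ∫ x : ℝ in Ioi (0:ℝ), Complex.exp (-(c * x)) = 1 / c := by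
  have hc0 : c ≠ 0 := fun h => by simp [h] at hc
  have hderiv : ∀ x ∈ Ioi (0:ℝ),
      HasDerivAt (fun x : ℝ => -Complex.exp (-(c * x)) / c) (Complex.exp (-(c * x))) x := by
    intro x _
    have h1 : HasDerivAt (fun x : ℝ => -(c * x)) (-(c * 1)) x :=
      (Complex.ofRealCLM.hasDerivAt.const_mul c).neg
    have h2 := ((h1.cexp).neg).div_const c
    refine h2.congr_deriv ?_
    rw [mul_one, mul_neg, neg_neg, mul_div_assoc, div_self hc0, mul_one]
  have hint : IntegrableOn (fun x : ℝ => Complex.exp (-(c * x))) (Ioi (0:ℝ)) := by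
    apply Integrable.mono' ((exp_neg_integrableOn_Ioi 0 hc))
    · exact (Complex.continuous_exp.comp (by continuity)).aestronglyMeasurable
    · filter_upwards with x
      rw [Complex.norm_exp]
      simp [mul_comm]
  have htend : Tendsto (fun x : ℝ => -Complex.exp (-(c * x)) / c) atTop (𝓝 0) := by
    rw [tendsto_zero_iff_norm_tendsto_zero]
    have h1 : Tendsto (fun x : ℝ => Real.exp (-(c.re * x)) / ‖c‖) atTop (𝓝 (0 / ‖c‖)) := by
      apply Tendsto.div_const
      exact (Real.tendsto_exp_neg_atTop_nhds_zero).comp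
        (Tendsto.const_mul_atTop hc tendsto_id)
    rw [zero_div] at h1
    convert h1 using 2 with x
    rw [norm_div, norm_neg, Complex.norm_exp]
    congr 1
    simp
  have hcont : ContinuousWithinAt (fun x : ℝ => -Complex.exp (-(c * x)) / c) (Ici (0:ℝ)) 0 :=
    ((Complex.continuous_exp.comp (by continuity)).neg.div_const c).continuousWithinAt
  have := integral_Ioi_of_hasDerivAt_of_tendsto hcont hderiv hint htend
  rw [this]
  simp [div_eq_mul_inv, one_div]

lemma aux_sqrt_re_pos {z : ℂ} (hz : ¬(z.im = 0 ∧ z.re ≤ 0)) : 0 < (z ^ (1/2 : ℂ)).re := by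
  have hz0 : z ≠ 0 := by rintro rfl; exact hz ⟨rfl, le_refl 0⟩
  have harg : z.arg ≠ Real.pi := by
    intro h
    rw [Complex.arg_eq_pi_iff] at h
    exact hz ⟨h.2, h.1.le⟩
  rw [Complex.cpow_def_of_ne_zero hz0, Complex.exp_re]
  apply mul_pos (Real.exp_pos _)
  apply Real.cos_pos_of_mem_Ioo
  have h1 : (Complex.log z * (1/2)).im = z.arg / 2 := by
    simp [Complex.mul_im, Complex.log_im, Complex.log_re]
    ring
  rw [h1]
  constructor
  · have := Complex.neg_pi_lt_arg z
    linarith [Real.pi_pos]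
  · have h2 := Complex.arg_le_pi z
    have h3 : z.arg < Real.pi := lt_of_le_of_ne h2 harg
    linarith

lemma aux_sq_sqrt {z : ℂ} (hz : z ≠ 0) : z ^ (1/2 : ℂ) * z ^ (1/2 : ℂ) = z := by
  rw [← Complex.cpow_add _ _ hz]
  norm_num

/-- With `G_z = (x ↦ e^{-√z x}/√z, -(-L+z)⁻¹w) ∈ L²(0,∞) ⊕ 𝔥`, for admissible `z, ζ`
one has `Γ(z) - Γ(ζ) = (z-ζ)⟨G_{ζ*}, G_z⟩`, where the inner product of the pair is the
`L²(0,∞)` inner product of the first components plus the `𝔥` inner product of the second ones. -/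
theorem stmt6 (𝔥 : Type*) [NormedAddCommGroup 𝔥] [InnerProductSpace ℂ 𝔥]
    [FiniteDimensional ℂ 𝔥] (L : Module.End ℂ 𝔥) (hL : L.IsSymmetric) (w : 𝔥)
    (z ζ : ℂ) (hz : ¬(z.im = 0 ∧ z.re ≤ 0)) (hζ : ¬(ζ.im = 0 ∧ ζ.re ≤ 0))
    (hzu : IsUnit (z • (1 : Module.End ℂ 𝔥) - L))
    (hζu : IsUnit (ζ • (1 : Module.End ℂ 𝔥) - L))
    (hζcu : IsUnit ((starRingEnd ℂ ζ) • (1 : Module.End ℂ 𝔥) - L)) :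
    Gam 𝔥 L w z - Gam 𝔥 L w ζ = (z - ζ) *
      ((∫ x in Ioi (0:ℝ),
          (starRingEnd ℂ (Complex.exp (-(((starRingEnd ℂ ζ) ^ (1/2 : ℂ)) * x)) /
            ((starRingEnd ℂ ζ) ^ (1/2 : ℂ)))) *
          (Complex.exp (-((z ^ (1/2 : ℂ)) * x)) / (z ^ (1/2 : ℂ)))) +
        (inner ℂ (-(Ring.inverse ((starRingEnd ℂ ζ) • (1 : Module.End ℂ 𝔥) - L) w))
          (-(Ring.inverse (z • (1 : Module.End ℂ 𝔥) - L) w)) : ℂ)) := by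
  have hz0 : z ≠ 0 := by rintro rfl; exact hz ⟨rfl, le_refl 0⟩
  have hζ0 : ζ ≠ 0 := by rintro rfl; exact hζ ⟨rfl, le_refl 0⟩
  have hζarg : ζ.arg ≠ Real.pi := by
    intro h
    rw [Complex.arg_eq_pi_iff] at h
    exact hζ ⟨h.2, h.1.le⟩
  set s := z ^ (1/2 : ℂ) with hs
  set t := ζ ^ (1/2 : ℂ) with ht
  set tc := (starRingEnd ℂ ζ) ^ (1/2 : ℂ) with htc
  have hsre : 0 < s.re := aux_sqrt_re_pos hz
  have htre : 0 < t.re := aux_sqrt_re_pos hζ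
  have hs0 : s ≠ 0 := fun h => by simp [h] at hsre
  have ht0 : t ≠ 0 := fun h => by simp [h] at htre
  have hss : s * s = z := aux_sq_sqrt hz0
  have htt : t * t = ζ := aux_sq_sqrt hζ0
  have htcconj : starRingEnd ℂ tc = t := by
    have h12 : starRingEnd ℂ (1/2 : ℂ) = 1/2 := by
      rw [show ((1:ℂ)/2) = ((1/2 : ℝ) : ℂ) by norm_num, Complex.conj_ofReal]
    rw [htc, Complex.conj_cpow _ _ hζarg, h12, ht]
    exact Complex.conj_conj _
  -- integral computation
  have hstre : 0 < (t + s).re := by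
    rw [Complex.add_re]; linarith
  have hint : (∫ x in Ioi (0:ℝ),
      (starRingEnd ℂ (Complex.exp (-(tc * x)) / tc)) *
        (Complex.exp (-(s * x)) / s)) = t⁻¹ * s⁻¹ * (t + s)⁻¹ := by
    have heq : ∀ x : ℝ, (starRingEnd ℂ (Complex.exp (-(tc * x)) / tc)) *
        (Complex.exp (-(s * x)) / s) = t⁻¹ * s⁻¹ * Complex.exp (-((t + s) * x)) := by
      intro x
      rw [map_div₀, ← Complex.exp_conj, htcconj]
      have h1 : starRingEnd ℂ (-(tc * x)) = -(t * x) := by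
        rw [map_neg, map_mul, htcconj, Complex.conj_ofReal]
      rw [h1]
      rw [show -((t + s) * (x:ℂ)) = -(t * x) + -(s * x) by ring, Complex.exp_add]
      field_simp
    simp_rw [heq]
    rw [integral_const_mul, aux_integral_cexp hstre, one_div]
  -- operator part
  set P := ζ • (1 : Module.End ℂ 𝔥) - L with hP
  set Q := z • (1 : Module.End ℂ 𝔥) - L with hQ
  set Pc := (starRingEnd ℂ ζ) • (1 : Module.End ℂ 𝔥) - L with hPc
  have hsym : ∀ u : 𝔥, (inner ℂ (Ring.inverse Pc w) u : ℂ) = inner ℂ w (Ring.inverse P u) := by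
    intro u
    have hw : Pc (Ring.inverse Pc w) = w := by
      rw [← Module.End.mul_apply, Ring.mul_inverse_cancel _ hζcu, Module.End.one_apply]
    have hu : P (Ring.inverse P u) = u := by
      rw [← Module.End.mul_apply, Ring.mul_inverse_cancel _ hζu, Module.End.one_apply]
    set v := Ring.inverse Pc w with hv
    calc (inner ℂ v u : ℂ) = inner ℂ v (P (Ring.inverse P u)) := by rw [hu]
      _ = inner ℂ (Pc v) (Ring.inverse P u) := by
          rw [hP, hPc]
          simp only [LinearMap.sub_apply, LinearMap.smul_apply, Module.End.one_apply]
          rw [inner_sub_right, inner_sub_left, inner_smul_right, inner_smul_left,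
            Complex.conj_conj, hL v]
      _ = inner ℂ w (Ring.inverse P u) := by rw [hw]
  have hres : Ring.inverse P w - Ring.inverse Q w =
      (z - ζ) • Ring.inverse P (Ring.inverse Q w) := by
    set a := Ring.inverse Q w with ha
    have hQa : Q a = w := by
      rw [ha, ← Module.End.mul_apply, Ring.mul_inverse_cancel _ hzu, Module.End.one_apply]
    have hPa : Ring.inverse P (P a) = a := by
      rw [← Module.End.mul_apply, Ring.inverse_mul_cancel _ hζu, Module.End.one_apply]
    calc Ring.inverse P w - Ring.inverse Q w
        = Ring.inverse P (Q a) - Ring.inverse P (P a) := by rw [hQa, hPa]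
      _ = Ring.inverse P (Q a - P a) := by rw [map_sub]
      _ = Ring.inverse P ((z - ζ) • a) := by
          congr 1
          rw [hQ, hP]
          simp only [LinearMap.sub_apply, LinearMap.smul_apply, Module.End.one_apply, sub_smul]
          abel
      _ = (z - ζ) • Ring.inverse P a := by rw [_root_.map_smul]
  have hinner : (inner ℂ (-(Ring.inverse Pc w)) (-(Ring.inverse Q w)) : ℂ) =
      inner ℂ w (Ring.inverse P (Ring.inverse Q w)) := by
    rw [inner_neg_neg, hsym]
  have hres' : (z - ζ) * (inner ℂ w (Ring.inverse P (Ring.inverse Q w)) : ℂ) =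
      inner ℂ w (Ring.inverse P w) - inner ℂ w (Ring.inverse Q w) := by
    rw [← inner_smul_right, ← hres, inner_sub_right]
  have key : (z - ζ) * (t⁻¹ * s⁻¹ * (t + s)⁻¹) = t⁻¹ - s⁻¹ := by
    have hts0 : t + s ≠ 0 := fun h => by rw [h] at hstre; simp at hstre
    have hzeq : z - ζ = (s - t) * (t + s) := by rw [← hss, ← htt]; ring
    rw [hzeq]
    field_simp
  rw [Gam, Gam, hint, hinner, mul_add, hres']
  rw [← hs, ← ht]
  linear_combination -key
end

section
/- Let A₀ and τ be as in the generalized Lamb model and R(z) := (-A₀+z)⁻¹ + (θ+Γ(z))⁻¹ G_z ⊗ G_{z*}. If the operator family R(z) satisfies the relation Γ(z)-Γ(ζ) = (z-ζ)⟨G_{ζ*},G_z⟩ and G_ζ - G_z = (z-ζ)(-A₀+z)⁻¹G_z, then R satisfies the first resolvent identity R(ζ) - R(z) = (z-ζ) R(ζ) R(z). -/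
open Complex ContinuousLinearMap

/-- Abstract Krein-type resolvent formula: if `R(z) = R₀(z) + (θ+Γ(z))⁻¹ G_z ⊗ G_{z*}`,
where `R₀` satisfies the first resolvent identity, `Γ(z)-Γ(ζ) = (z-ζ)⟨G_{ζ*},G_z⟩`
and `G_ζ - G_z = (z-ζ)R₀(z)G_z`, then `R` also satisfies the first resolvent identity
`R(ζ) - R(z) = (z-ζ) R(ζ) R(z)`. -/
theorem stmt7 (H : Type*) [NormedAddCommGroup H] [InnerProductSpace ℂ H] [CompleteSpace H]
    (D : Set ℂ) (R0 : ℂ → H →L[ℂ] H) (G : ℂ → H) (Γ : ℂ → ℂ) (θ : ℝ)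
    (hD : ∀ z ∈ D, starRingEnd ℂ z ∈ D)
    (hres : ∀ z ∈ D, ∀ ζ ∈ D, R0 ζ - R0 z = (z - ζ) • ((R0 ζ).comp (R0 z)))
    (hadj : ∀ z ∈ D, ContinuousLinearMap.adjoint (R0 z) = R0 (starRingEnd ℂ z))
    (hG : ∀ z ∈ D, ∀ ζ ∈ D, G ζ - G z = (z - ζ) • (R0 z) (G z))
    (hΓ : ∀ z ∈ D, ∀ ζ ∈ D, Γ z - Γ ζ = (z - ζ) * (inner ℂ (G (starRingEnd ℂ ζ)) (G z) : ℂ))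
    (hθ : ∀ z ∈ D, (θ : ℂ) + Γ z ≠ 0)
    (R : ℂ → H →L[ℂ] H)
    (hRdef : ∀ z ∈ D, R z = R0 z +
      ((θ : ℂ) + Γ z)⁻¹ • ((innerSL ℂ (G (starRingEnd ℂ z))).smulRight (G z))) :
    ∀ z ∈ D, ∀ ζ ∈ D, R ζ - R z = (z - ζ) • ((R ζ).comp (R z)) := by
  -- derived fact: (z-ζ) • R0 ζ (G z) = G ζ - G z
  have key : ∀ z ∈ D, ∀ ζ ∈ D, (z - ζ) • (R0 ζ) (G z) = G ζ - G z := by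
    intro z hz ζ hζ
    have h1 : G ζ - G z = (z - ζ) • (R0 z) (G z) := hG z hz ζ hζ
    have h2 : (z - ζ) • (R0 ζ) (G ζ) = G ζ - G z := by
      rw [show z - ζ = -(ζ - z) by ring, neg_smul, ← hG ζ hζ z hz, neg_sub]
    have h4 : (R0 ζ) (G z) - (R0 z) (G z) = (z - ζ) • (R0 ζ) ((R0 z) (G z)) := by
      have h3 := congrArg (fun T : H →L[ℂ] H => T (G z)) (hres z hz ζ hζ)
      simpa using h3
    have h5 : (z - ζ) • (R0 ζ) (G z) - (G ζ - G z)
        = (G ζ - G z) - (z - ζ) • (R0 ζ) (G z) := by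
      calc (z - ζ) • (R0 ζ) (G z) - (G ζ - G z)
          = (z - ζ) • ((R0 ζ) (G z) - (R0 z) (G z)) := by rw [smul_sub, h1]
        _ = (z - ζ) • ((z - ζ) • (R0 ζ) ((R0 z) (G z))) := by rw [h4]
        _ = (R0 ζ) ((z - ζ) • ((z - ζ) • (R0 z) (G z))) := by
              rw [map_smul, map_smul]
        _ = (R0 ζ) ((z - ζ) • (G ζ - G z)) := by rw [← h1]
        _ = (z - ζ) • ((R0 ζ) (G ζ) - (R0 ζ) (G z)) := by rw [map_smul, map_sub]
        _ = (G ζ - G z) - (z - ζ) • (R0 ζ) (G z) := by rw [smul_sub, h2]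
    have h6 : (2 : ℂ) • ((z - ζ) • (R0 ζ) (G z)) = (2 : ℂ) • (G ζ - G z) := by
      rw [two_smul, two_smul, ← sub_eq_sub_iff_add_eq_add]
      exact h5
    exact smul_right_injective H two_ne_zero h6
  intro z hz ζ hζ
  by_cases hzz : z = ζ
  · simp [hzz]
  have hw : z - ζ ≠ 0 := sub_ne_zero.mpr hzz
  ext ψ
  have ha := hθ z hz
  have hb := hθ ζ hζ
  -- scalar/vector facts
  have f1 : (R0 ζ) ((R0 z) ψ) = (z - ζ)⁻¹ • ((R0 ζ) ψ - (R0 z) ψ) := by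
    have h := congrArg (fun T : H →L[ℂ] H => T ψ) (hres z hz ζ hζ)
    simp only [ContinuousLinearMap.sub_apply, ContinuousLinearMap.smul_apply,
      ContinuousLinearMap.coe_comp', Function.comp_apply] at h
    rw [h, inv_smul_smul₀ hw]
  have f2 : (R0 ζ) (G z) = (z - ζ)⁻¹ • (G ζ - G z) := by
    rw [← key z hz ζ hζ, inv_smul_smul₀ hw]
  have f3 : (inner ℂ (G (starRingEnd ℂ ζ)) ((R0 z) ψ) : ℂ)
      = (z - ζ)⁻¹ * ((inner ℂ (G (starRingEnd ℂ ζ)) ψ : ℂ) - inner ℂ (G (starRingEnd ℂ z)) ψ) := by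
    have hk := key (starRingEnd ℂ ζ) (hD ζ hζ) (starRingEnd ℂ z) (hD z hz)
    have hadj' : (inner ℂ (G (starRingEnd ℂ ζ)) ((R0 z) ψ) : ℂ)
        = inner ℂ ((R0 (starRingEnd ℂ z)) (G (starRingEnd ℂ ζ))) ψ := by
      rw [← hadj z hz, ContinuousLinearMap.adjoint_inner_left]
    rw [hadj']
    have : (z - ζ) * (inner ℂ ((R0 (starRingEnd ℂ z)) (G (starRingEnd ℂ ζ))) ψ : ℂ)
        = (inner ℂ (G (starRingEnd ℂ ζ)) ψ : ℂ) - inner ℂ (G (starRingEnd ℂ z)) ψ := by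
      rw [show (z - ζ : ℂ) = starRingEnd ℂ (starRingEnd ℂ z - starRingEnd ℂ ζ) by
        simp [map_sub], ← inner_smul_left]
      rw [show (starRingEnd ℂ z - starRingEnd ℂ ζ) • (R0 (starRingEnd ℂ z)) (G (starRingEnd ℂ ζ))
          = -((starRingEnd ℂ ζ - starRingEnd ℂ z) • (R0 (starRingEnd ℂ z)) (G (starRingEnd ℂ ζ)))
          by rw [← neg_smul]; ring_nf]
      rw [hk]
      simp [inner_sub_left]
    field_simp at this ⊢
    linear_combination this
  have f4 : (inner ℂ (G (starRingEnd ℂ ζ)) (G z) : ℂ)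
      = (z - ζ)⁻¹ * (((θ : ℂ) + Γ z) - ((θ : ℂ) + Γ ζ)) := by
    have h := hΓ z hz ζ hζ
    field_simp
    linear_combination -h
  rw [hRdef z hz, hRdef ζ hζ]
  simp only [ContinuousLinearMap.sub_apply, ContinuousLinearMap.add_apply, ContinuousLinearMap.smul_apply,
    ContinuousLinearMap.coe_comp', Function.comp_apply, ContinuousLinearMap.smulRight_apply,
    innerSL_apply_apply, map_add, map_smul, inner_add_right, inner_smul_right, f1, f2, f3, f4]
  match_scalars <;> field_simp <;> ring
end

section
/- Define polynomials recursively by p₁(z) = θz + 1 and p_k(z) = z²p_{k-1}(z) - ⟨w, L^{k-2}w⟩ z for k ≥ 2, where L is self-adjoint on n-dimensional 𝔥 with distinct eigenvalues λ₁,…,λₙ and w ∈ 𝔥. Let p(z) = p_{n+1}(z) - ∑_{i,j=1}^n λᵢⁿ (V⁻¹)_{ij} p_j(z), with V the Vandermonde matrix of the λᵢ. Then p(z) = (θz+1)·det(z² - L) - z·∑_{j=1}^n (∑_{k=1}^j a_{j-k} ⟨w, L^{k-1}w⟩) z^{2(n-j)}, where a₀ = 1 and a_j = (-1)^j ∑_{i₁<…<i_j}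 λ_{i₁}⋯λ_{i_j} are the signed elementary symmetric functions of the eigenvalues. -/
open Finset Matrix

/-- The recursively defined polynomials: `p₁(z) = θz+1`,
`p_{k+1}(z) = z²p_k(z) - c_{k-1} z` where `c_k = ⟨w, L^k w⟩` (index shifted so that
`pseq θ c k` is the paper's `p_{k+1}`). -/
noncomputable def pseq (θ : ℝ) (c : ℕ → ℂ) : ℕ → ℂ → ℂ
  | 0 => fun z => θ * z + 1
  | (k + 1) => fun z => z ^ 2 * pseq θ c k z - c k * z

lemma aux_char (n : ℕ) (v : Fin n → ℂ) (a : ℕ → ℂ)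
    (ha : ∀ j, a j = (-1 : ℂ) ^ j *
      ∑ t ∈ Finset.powersetCard j (Finset.univ : Finset (Fin n)), ∏ i ∈ t, v i)
    (x : ℂ) :
    ∏ i : Fin n, (x - v i) = ∑ j ∈ Finset.range (n + 1), a (n - j) * x ^ j := by
  set P : Polynomial ℂ := ∏ i : Fin n, (Polynomial.X - Polynomial.C (v i)) with hP
  have hdeg : P.natDegree = n := by
    rw [hP, Polynomial.natDegree_prod]
    · simp [Polynomial.natDegree_X_sub_C]
    · exact fun i _ => Polynomial.X_sub_C_ne_zero _
  have hcoeff : ∀ k, k ≤ n → P.coeff k = a (n - k) := by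
    intro k hk
    have h1 : ∀ i : Fin n, Polynomial.X - Polynomial.C (v i)
        = Polynomial.X + Polynomial.C (-v i) := by
      intro i; rw [map_neg]; ring
    have hcard : (univ : Finset (Fin n)).card = n := by simp
    rw [hP]
    simp_rw [h1]
    rw [Finset.prod_X_add_C_coeff _ _ (by rw [hcard]; exact hk), hcard, ha]
    rw [Finset.sum_congr rfl (fun t ht => ?_), ← Finset.mul_sum]
    rw [Finset.mem_powersetCard] at ht
    rw [Finset.prod_congr rfl (fun i (_ : i ∈ t) => (neg_one_mul (v i)).symm),
      Finset.prod_mul_distrib, Finset.prod_const, ht.2]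
  have heval : P.eval x = ∏ i : Fin n, (x - v i) := by
    rw [hP]
    simp only [Polynomial.eval_prod, Polynomial.eval_sub, Polynomial.eval_X, Polynomial.eval_C]
  rw [← heval, Polynomial.eval_eq_sum_range' (lt_of_le_of_lt hdeg.le (Nat.lt_succ_self n))]
  exact Finset.sum_congr rfl fun k hk =>
    by rw [hcoeff k (Nat.lt_succ_iff.mp (Finset.mem_range.mp hk))]

lemma pseq_closed (θ : ℝ) (c : ℕ → ℂ) (k : ℕ) (z : ℂ) :
    pseq θ c k z = z ^ (2 * k) * (θ * z + 1)
      - z * ∑ m ∈ Finset.range k, c m * z ^ (2 * (k - 1 - m)) := by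
  induction k with
  | zero => simp [pseq]
  | succ k ih =>
    have hs : z ^ 2 * ∑ m ∈ Finset.range k, c m * z ^ (2 * (k - 1 - m))
        = ∑ m ∈ Finset.range k, c m * z ^ (2 * (k + 1 - 1 - m)) := by
      rw [Finset.mul_sum]
      refine Finset.sum_congr rfl fun m hm => ?_
      rw [Finset.mem_range] at hm
      rw [show 2 * (k + 1 - 1 - m) = 2 * (k - 1 - m) + 2 by omega, pow_add]
      ring
    rw [show pseq θ c (k+1) z = z ^ 2 * pseq θ c k z - c k * z from rfl, ih,
      Finset.sum_range_succ, ← hs,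
      show k + 1 - 1 - k = 0 by omega, show 2 * (k+1) = 2 * k + 2 by ring, pow_add]
    ring

/-- Explicit form of the boundary polynomial: with `L` self-adjoint on `n`-dimensional
`𝔥` with distinct eigenvalues `λᵢ` (orthonormal eigenbasis `b`), `V` the Vandermonde
matrix of the `λᵢ`, `c k = ⟨w,L^k w⟩`, and `a_j` the signed elementary symmetric
functions of the eigenvalues, one has
`p(z) = p_{n+1}(z) - ∑_{i,j} λᵢⁿ (V⁻¹)_{ij} p_j(z)
      = (θz+1)·∏ᵢ(z²-λᵢ) - z·∑_{j=1}^n (∑_{k=1}^j a_{j-k} c_{k-1}) z^{2(n-j)}`. -/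
theorem stmt11 (n : ℕ) (𝔥 : Type*) [NormedAddCommGroup 𝔥] [InnerProductSpace ℂ 𝔥]
    [FiniteDimensional ℂ 𝔥]
    (L : Module.End ℂ 𝔥) (hL : L.IsSymmetric)
    (b : OrthonormalBasis (Fin n) ℂ 𝔥) (lam : Fin n → ℝ)
    (hinj : Function.Injective lam)
    (heig : ∀ i, L (b i) = (lam i : ℂ) • b i)
    (w : 𝔥) (θ : ℝ)
    (V : Matrix (Fin n) (Fin n) ℂ) (hV : ∀ j k, V j k = (lam k : ℂ) ^ (j : ℕ))
    (c : ℕ → ℂ) (hc : ∀ k, c k = (inner ℂ w ((L ^ k) w) : ℂ))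
    (a : ℕ → ℂ)
    (ha : ∀ j, a j = (-1 : ℂ) ^ j *
      ∑ t ∈ Finset.powersetCard j (Finset.univ : Finset (Fin n)), ∏ i ∈ t, (lam i : ℂ)) :
    ∀ z : ℂ,
      pseq θ c n z -
        ∑ i : Fin n, ∑ j : Fin n, (lam i : ℂ) ^ n * V⁻¹ i j * pseq θ c (j : ℕ) z =
      (θ * z + 1) * (∏ i : Fin n, (z ^ 2 - (lam i : ℂ))) -
        z * ∑ j : Fin n,
          (∑ k ∈ Finset.range ((j : ℕ) + 1), a ((j : ℕ) - k) * c k) *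
            z ^ (2 * (n - 1 - (j : ℕ))) := by
  intro z
  have ha0 : a 0 = 1 := by rw [ha 0]; simp
  have hchar : ∀ x : ℂ, ∏ i : Fin n, (x - (lam i : ℂ))
      = ∑ j ∈ Finset.range (n + 1), a (n - j) * x ^ j :=
    aux_char n (fun i => (lam i : ℂ)) a ha
  have hVdet : IsUnit V.det := by
    have hVT : V = (Matrix.vandermonde fun i => (lam i : ℂ))ᵀ := by
      ext j k
      rw [Matrix.transpose_apply, Matrix.vandermonde_apply, hV]
    rw [hVT, Matrix.det_transpose, Matrix.det_vandermonde, isUnit_iff_ne_zero]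
    refine Finset.prod_ne_zero_iff.mpr fun i _ => Finset.prod_ne_zero_iff.mpr fun j hj => ?_
    rw [Finset.mem_Ioi] at hj
    rw [sub_ne_zero]
    intro h
    have h' : lam j = lam i := by exact_mod_cast h
    exact (ne_of_gt hj) (hinj h')
  have hrow : ∀ j : Fin n, (∑ i : Fin n, (lam i : ℂ) ^ n * V⁻¹ i j)
      = -(a (n - (j : ℕ))) := by
    have hd : (fun i : Fin n => (lam i : ℂ) ^ n)
        = Matrix.vecMul (fun j : Fin n => -(a (n - (j : ℕ)))) V := by
      funext i
      have h0 := hchar ((lam i : ℂ))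
      rw [Finset.prod_eq_zero (Finset.mem_univ i) (by ring)] at h0
      rw [Finset.sum_range_succ, Nat.sub_self, ha0, one_mul] at h0
      have h1 : (lam i : ℂ) ^ n
          = ∑ j ∈ Finset.range n, -(a (n - j)) * (lam i : ℂ) ^ j := by
        rw [Finset.sum_congr rfl fun j (_ : j ∈ Finset.range n) =>
          neg_mul (a (n - j)) ((lam i : ℂ) ^ j), Finset.sum_neg_distrib]
        linear_combination -h0
      show (lam i : ℂ) ^ n = ∑ j : Fin n, -(a (n - (j : ℕ))) * V j i
      rw [Finset.sum_congr rfl fun j _ => by rw [hV],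
        Fin.sum_univ_eq_sum_range (fun j => -(a (n - j)) * (lam i : ℂ) ^ j) n]
      exact h1
    intro j
    have h2 : (∑ i : Fin n, (lam i : ℂ) ^ n * V⁻¹ i j)
        = Matrix.vecMul (fun i : Fin n => (lam i : ℂ) ^ n) V⁻¹ j := by
      simp [Matrix.vecMul, dotProduct]
    rw [h2, hd, Matrix.vecMul_vecMul, Matrix.mul_nonsing_inv V hVdet, Matrix.vecMul_one]
  -- collapse the double sum
  have hLHS : pseq θ c n z -
        ∑ i : Fin n, ∑ j : Fin n, (lam i : ℂ) ^ n * V⁻¹ i j * pseq θ c (j : ℕ) z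
      = ∑ j ∈ Finset.range (n + 1), a (n - j) * pseq θ c j z := by
    have hstep : ∑ j : Fin n, ∑ i : Fin n, (lam i : ℂ) ^ n * V⁻¹ i j * pseq θ c (j : ℕ) z
        = ∑ j : Fin n, -(a (n - (j : ℕ))) * pseq θ c (j : ℕ) z := by
      refine Finset.sum_congr rfl fun j _ => ?_
      rw [← Finset.sum_mul, hrow j]
    rw [Finset.sum_comm, hstep, Finset.sum_range_succ, Nat.sub_self, ha0, one_mul,
      Fin.sum_univ_eq_sum_range (fun j => -(a (n - j)) * pseq θ c j z) n]
    rw [Finset.sum_congr rfl fun j (_ : j ∈ Finset.range n) =>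
      neg_mul (a (n - j)) (pseq θ c j z), Finset.sum_neg_distrib]
    ring
  rw [hLHS]
  have expand : ∑ j ∈ Finset.range (n + 1), a (n - j) * pseq θ c j z
      = (θ * z + 1) * ∑ j ∈ Finset.range (n + 1), a (n - j) * (z ^ 2) ^ j
        - z * ∑ j ∈ Finset.range (n + 1), ∑ m ∈ Finset.range j,
            a (n - j) * c m * z ^ (2 * (j - 1 - m)) := by
    rw [Finset.mul_sum, Finset.mul_sum, ← Finset.sum_sub_distrib]
    refine Finset.sum_congr rfl fun j _ => ?_
    have h3 : a (n - j) * (z * ∑ m ∈ Finset.range j, c m * z ^ (2 * (j - 1 - m)))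
        = z * ∑ m ∈ Finset.range j, a (n - j) * c m * z ^ (2 * (j - 1 - m)) := by
      simp_rw [Finset.mul_sum]
      exact Finset.sum_congr rfl fun m _ => by ring
    rw [pseq_closed, mul_sub, h3, pow_mul]
    ring
  have hre : ∑ j ∈ Finset.range (n + 1), ∑ m ∈ Finset.range j,
        a (n - j) * c m * z ^ (2 * (j - 1 - m))
      = ∑ j ∈ Finset.range n, ∑ k ∈ Finset.range (j + 1),
          a (j - k) * c k * z ^ (2 * (n - 1 - j)) := by
    rw [Finset.sum_sigma', Finset.sum_sigma']
    refine Finset.sum_nbij' (fun p => ⟨n - p.1 + p.2, p.2⟩) (fun q => ⟨n - q.1 + q.2, q.2⟩)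
      ?_ ?_ ?_ ?_ ?_
    · rintro ⟨j, m⟩ hp
      simp only [Finset.mem_sigma, Finset.mem_range] at hp ⊢
      omega
    · rintro ⟨j, k⟩ hq
      simp only [Finset.mem_sigma, Finset.mem_range] at hq ⊢
      omega
    · rintro ⟨j, m⟩ hp
      simp only [Finset.mem_sigma, Finset.mem_range] at hp
      simp only [Sigma.mk.inj_iff, heq_eq_eq]
      exact ⟨by omega, trivial⟩
    · rintro ⟨j, k⟩ hq
      simp only [Finset.mem_sigma, Finset.mem_range] at hq
      simp only [Sigma.mk.inj_iff, heq_eq_eq]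
      exact ⟨by omega, trivial⟩
    · rintro ⟨j, m⟩ hp
      simp only [Finset.mem_sigma, Finset.mem_range] at hp
      have e1 : (n - j + m) - m = n - j := by omega
      have e2 : n - 1 - (n - j + m) = j - 1 - m := by omega
      dsimp only
      rw [e1, e2]
  have hfin : ∑ j : Fin n, (∑ k ∈ Finset.range ((j : ℕ) + 1), a ((j : ℕ) - k) * c k) *
        z ^ (2 * (n - 1 - (j : ℕ)))
      = ∑ j ∈ Finset.range n, ∑ k ∈ Finset.range (j + 1),
          a (j - k) * c k * z ^ (2 * (n - 1 - j)) := by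
    rw [Fin.sum_univ_eq_sum_range
      (fun j => (∑ k ∈ Finset.range (j + 1), a (j - k) * c k) * z ^ (2 * (n - 1 - j))) n]
    exact Finset.sum_congr rfl fun j _ => by rw [Finset.sum_mul]
  rw [expand, ← hchar (z ^ 2), hre, ← hfin]
end
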